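/- Approximate greedy guarantee: Let g be a monotone nondecreasing nonnegative set function on [n] with g(∅)=0, submodularity ratio κ ∈ (0,1] and curvature c ∈ (0,1]. Let S† = {s¹,…,s^H} be built incrementally so that g(S^{l−1}∪{s^l}) ≥ max_{s∈[n]} g(S^{l−1}∪{s}) − τ_l with τ_l ≥ 0 for each l. Then g(S†) ≥ (1/c)(1 − e^{−cκ}) · max_{|S|≤H} g(S) − Σ_{l=1}^H τ_l. -/
import Mathlib

open Finset

noncomputable def Bf (c κ : ℝ) (m r : ℕ) : ℝ :=
  if r = 0 then 0 else min 1 ((1 - (1 - c * κ / r) ^ m) / c)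

lemma base_mem {c κ : ℝ} (hκ0 : 0 < κ) (hκ1 : κ ≤ 1) (hc0 : 0 < c) (hc1 : c ≤ 1)
    {r : ℕ} (hr : 1 ≤ r) : 0 ≤ 1 - c * κ / r ∧ 1 - c * κ / r ≤ 1 := by
  have hr1 : (1 : ℝ) ≤ r := by exact_mod_cast hr
  have h1 : 0 < c * κ := mul_pos hc0 hκ0
  have h2 : c * κ ≤ 1 := by nlinarith
  have h3 : c * κ / r ≤ c * κ := by
    calc c * κ / r ≤ c * κ / 1 := by
          apply div_le_div_of_nonneg_left (le_of_lt h1) one_pos hr1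
      _ = c * κ := by ring
  have h4 : 0 ≤ c * κ / r := by positivity
  exact ⟨by linarith, by linarith⟩

lemma Bf_nonneg {c κ : ℝ} (hκ0 : 0 < κ) (hκ1 : κ ≤ 1) (hc0 : 0 < c) (hc1 : c ≤ 1)
    (m r : ℕ) : 0 ≤ Bf c κ m r := by
  unfold Bf
  split
  · exact le_refl _
  · rename_i hr
    have hb := base_mem hκ0 hκ1 hc0 hc1 (r := r) (Nat.one_le_iff_ne_zero.mpr hr)
    have : (1 - c * κ / r) ^ m ≤ 1 := pow_le_one₀ hb.1 hb.2
    have : 0 ≤ (1 - (1 - c * κ / r) ^ m) / c := by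
      apply div_nonneg (by linarith) hc0.le
    exact le_min one_pos.le this

lemma Bf_le_one {c κ : ℝ} (m r : ℕ) : Bf c κ m r ≤ 1 := by
  unfold Bf; split
  · norm_num
  · exact min_le_left _ _

lemma Bf_zero (c κ : ℝ) (r : ℕ) : Bf c κ 0 r = 0 := by
  unfold Bf; split
  · rfl
  · simp

lemma star_ineq {c a sx : ℝ} (hc0 : 0 ≤ c) (hc1 : c ≤ 1) (ha0 : 0 ≤ a) (ha1 : a ≤ 1)
    (has : a ≤ sx) (hv0 : 0 ≤ 1 - c * sx) (hkey : a ^ 2 ≤ (1 - a) * (sx - a)) :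
    ∀ m : ℕ, 1 - c ≤ (1 - c * sx) ^ m →
      (1 - c * sx) ^ m * (1 - a) + a * (1 - c) ≤ (1 - c * a) ^ (m + 1) := by
  intro m
  induction m with
  | zero => intro _; rw [pow_zero, pow_one]; nlinarith
  | succ m ih =>
      intro h
      have hsx0 : 0 ≤ sx := le_trans ha0 has
      have hv1 : 1 - c * sx ≤ 1 := by nlinarith
      have hvm0 : 0 ≤ (1 - c * sx) ^ m := pow_nonneg hv0 m
      have hmono : (1 - c * sx) ^ (m + 1) ≤ (1 - c * sx) ^ m := by
        rw [pow_succ]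
        nlinarith
      have hvm : 1 - c ≤ (1 - c * sx) ^ m := le_trans h hmono
      have IH := ih hvm
      have hu0 : 0 ≤ 1 - c * a := by nlinarith
      have h1 : (1 - c * a) * ((1 - c * sx) ^ m * (1 - a) + a * (1 - c))
          ≤ (1 - c * a) ^ (m + 1 + 1) := by
        calc (1 - c * a) * ((1 - c * sx) ^ m * (1 - a) + a * (1 - c))
            ≤ (1 - c * a) * (1 - c * a) ^ (m + 1) := mul_le_mul_of_nonneg_left IH hu0
          _ = (1 - c * a) ^ (m + 1 + 1) := by ring
      have h2 : (1 - c * sx) ^ (m + 1) * (1 - a) + a * (1 - c)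
          ≤ (1 - c * a) * ((1 - c * sx) ^ m * (1 - a) + a * (1 - c)) := by
        rw [pow_succ]
        nlinarith [mul_nonneg (sub_nonneg.mpr hvm)
            (mul_nonneg (mul_nonneg (by linarith : (0:ℝ) ≤ 1 - a) hc0)
              (by linarith : (0:ℝ) ≤ sx - a)),
          mul_nonneg (mul_nonneg hc0 (by linarith : (0:ℝ) ≤ 1 - c))
            (sub_nonneg.mpr hkey)]
      linarith

lemma NPstep {c κ : ℝ} (hκ0 : 0 < κ) (hκ1 : κ ≤ 1) (hc0 : 0 < c) (hc1 : c ≤ 1)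
    (m r : ℕ) {ρ τ E E' : ℝ}
    (hρ : 0 ≤ ρ) (hτ : 0 ≤ τ) (hE : 0 ≤ E) (hE' : 0 ≤ E')
    (hA : κ * E ≤ r * (ρ + τ)) (hEE : E - c * ρ ≤ E') :
    Bf c κ (m + 1) r * E ≤ ρ + τ + Bf c κ m r * E' := by
  have hb0nn : 0 ≤ Bf c κ m r := Bf_nonneg hκ0 hκ1 hc0 hc1 _ _
  rcases Nat.eq_zero_or_pos r with hr | hr
  · subst hr
    have hE0 : E = 0 := le_antisymm (by push_cast at hA; nlinarith) hE
    have h1 : Bf c κ (m + 1) 0 = 0 := by simp [Bf]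
    rw [hE0, h1, mul_zero]
    have : 0 ≤ Bf c κ m 0 * E' := mul_nonneg hb0nn hE'
    linarith
  · have hb := base_mem hκ0 hκ1 hc0 hc1 hr
    set u : ℝ := 1 - c * κ / r with hu
    by_cases hcase : E ≤ c * ρ
    · have h1 : Bf c κ (m + 1) r * E ≤ E := mul_le_of_le_one_left hE (Bf_le_one _ _)
      have h2 : c * ρ ≤ ρ := by nlinarith
      have h3 : 0 ≤ Bf c κ m r * E' := mul_nonneg hb0nn hE'
      linarith
    · push_neg at hcase
      have hrpos : (0:ℝ) < r := by exact_mod_cast hr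
      have hrne : r ≠ 0 := Nat.pos_iff_ne_zero.mp hr
      have hum : 0 ≤ u ^ m := pow_nonneg hb.1 m
      have hum1 : u ^ m ≤ 1 := pow_le_one₀ hb.1 hb.2
      have hb1 : Bf c κ (m + 1) r ≤ (1 - u ^ (m + 1)) / c := by
        unfold Bf; rw [if_neg hrne]; exact min_le_right _ _
      have hb0le : Bf c κ m r ≤ (1 - u ^ m) / c := by
        unfold Bf; rw [if_neg hrne]; exact min_le_right _ _
      have hb0c : c * Bf c κ m r ≤ 1 - u ^ m := by
        have h := mul_le_mul_of_nonneg_left hb0le hc0.le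
        rwa [mul_div_cancel₀ _ (ne_of_gt hc0)] at h
      have hdiff : Bf c κ (m + 1) r - Bf c κ m r ≤ u ^ m * (κ / r) := by
        by_cases hcap : (1 - u ^ m) / c ≤ 1
        · have hb0eq : Bf c κ m r = (1 - u ^ m) / c := by
            unfold Bf; rw [if_neg hrne]; exact min_eq_right hcap
          have heq : (1 - u ^ (m + 1)) / c - (1 - u ^ m) / c = u ^ m * (κ / r) := by
            rw [pow_succ, hu]
            field_simp
            ring
          rw [hb0eq]
          linarith
        · push_neg at hcap
          have hb0eq : Bf c κ m r = 1 := by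
            unfold Bf; rw [if_neg hrne]; exact min_eq_left hcap.le
          have h1 : Bf c κ (m + 1) r ≤ 1 := Bf_le_one _ _
          have h2 : 0 ≤ u ^ m * (κ / r) := by positivity
          linarith
      have hAr : κ / r * E ≤ ρ + τ := by
        rw [div_mul_eq_mul_div, div_le_iff₀ hrpos]
        linarith
      have h2 : (Bf c κ (m + 1) r - Bf c κ m r) * E ≤ u ^ m * (κ / r) * E :=
        mul_le_mul_of_nonneg_right hdiff hE
      have h3 : u ^ m * (κ / r * E) ≤ u ^ m * (ρ + τ) := mul_le_mul_of_nonneg_left hAr hum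
      have h4 : Bf c κ m r * E ≤ Bf c κ m r * (E' + c * ρ) :=
        mul_le_mul_of_nonneg_left (by linarith) hb0nn
      nlinarith [mul_le_mul_of_nonneg_right hb0c hρ, mul_nonneg (by linarith : (0:ℝ) ≤ 1 - u ^ m) hτ]

set_option maxHeartbeats 1600000 in
lemma Pstep {c κ : ℝ} (hκ0 : 0 < κ) (hκ1 : κ ≤ 1) (hc0 : 0 < c) (hc1 : c ≤ 1)
    (m r : ℕ) (hr : 2 ≤ r) {ρ τ E E' : ℝ}
    (hρ : 0 ≤ ρ) (hτ : 0 ≤ τ) (hE : 0 ≤ E) (hE' : 0 ≤ E')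
    (hA : κ * E ≤ r * (ρ + τ)) (hE'def : E' = E - ρ) :
    Bf c κ (m + 1) r * E ≤ ρ + τ + Bf c κ m (r - 1) * E' := by
  have hb0nn : 0 ≤ Bf c κ m (r - 1) := Bf_nonneg hκ0 hκ1 hc0 hc1 _ _
  have hb0le1 : Bf c κ m (r - 1) ≤ 1 := Bf_le_one _ _
  have hrpos : (0:ℝ) < r := by
    have : (0:ℕ) < r := by omega
    exact_mod_cast this
  have hR2 : (2:ℝ) ≤ r := by exact_mod_cast hr
  have hcast : ((r - 1 : ℕ) : ℝ) = (r : ℝ) - 1 := by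
    have : (1:ℕ) ≤ r := by omega
    push_cast [Nat.cast_sub this]
    ring
  have hR1pos : (0:ℝ) < (r:ℝ) - 1 := by linarith
  -- KEY inequality
  have hkeyB : Bf c κ (m + 1) r ≤ Bf c κ m (r - 1) + κ / r * (1 - Bf c κ m (r - 1)) := by
    have hrne : r ≠ 0 := by omega
    have hr1ne : r - 1 ≠ 0 := by omega
    obtain ⟨v, hv⟩ : ∃ x : ℝ, x = 1 - c * (κ / ((r:ℝ) - 1)) := ⟨_, rfl⟩
    have hb0eq' : Bf c κ m (r - 1) = min 1 ((1 - v ^ m) / c) := by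
      unfold Bf; rw [if_neg hr1ne, hcast, hv]
      ring_nf
    by_cases hcap : (1 - v ^ m) / c ≤ 1
    · have hb0eq : Bf c κ m (r - 1) = (1 - v ^ m) / c := by rw [hb0eq', min_eq_right hcap]
      -- star hypotheses
      obtain ⟨a, ha⟩ : ∃ x : ℝ, x = κ / (r:ℝ) := ⟨_, rfl⟩
      have ha0 : 0 ≤ a := by rw [ha]; positivity
      have ha1 : a ≤ 1 := by rw [ha, div_le_one hrpos]; linarith
      have has : a ≤ κ / ((r:ℝ) - 1) := by
        rw [ha]
        apply div_le_div_of_nonneg_left hκ0.le hR1pos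
        linarith
      have hv0 : 0 ≤ v := by
        rw [hv]
        have h1 : c * (κ / ((r:ℝ) - 1)) ≤ c * κ := by
          apply mul_le_mul_of_nonneg_left _ hc0.le
          rw [div_le_iff₀ hR1pos]
          nlinarith
        nlinarith
      have hkey : a ^ 2 ≤ (1 - a) * (κ / ((r:ℝ) - 1) - a) := by
        have expand : (1 - κ/(r:ℝ)) * (κ/((r:ℝ)-1) - κ/(r:ℝ)) - (κ/(r:ℝ))^2
            = κ * ((r:ℝ) - κ * (r:ℝ)) / ((r:ℝ)^2 * ((r:ℝ)-1)) := by
          field_simp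
          ring
        rw [ha]
        have hnum : 0 ≤ κ * ((r:ℝ) - κ * (r:ℝ)) := by
          nlinarith [mul_nonneg (mul_nonneg hκ0.le hrpos.le) (sub_nonneg.mpr hκ1)]
        have hfrac : 0 ≤ κ * ((r:ℝ) - κ * (r:ℝ)) / ((r:ℝ)^2 * ((r:ℝ)-1)) :=
          div_nonneg hnum (by positivity)
        linarith
      have hvc : 1 - c ≤ v ^ m := by
        have := (div_le_one hc0).mp hcap
        linarith
      have hv0' : 0 ≤ 1 - c * (κ / ((r:ℝ) - 1)) := by rw [← hv]; exact hv0
      have hvc' : 1 - c ≤ (1 - c * (κ / ((r:ℝ) - 1))) ^ m := by rw [← hv]; exact hvc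
      have hstar := star_ineq hc0.le hc1 ha0 ha1 has hv0' hkey m hvc'
      rw [← hv] at hstar
      -- Bf (m+1) r ≤ (1 - u^(m+1))/c where u = 1 - c*κ/r = 1 - c*a
      have hb1 : Bf c κ (m + 1) r ≤ (1 - (1 - c * a) ^ (m + 1)) / c := by
        unfold Bf; rw [if_neg hrne]
        have : c * κ / (r:ℝ) = c * a := by rw [ha]; ring
        rw [this]
        exact min_le_right _ _
      rw [hb0eq]
      have hgoal : (1 - (1 - c * a) ^ (m + 1)) / c
          ≤ (1 - v ^ m) / c + a * (1 - (1 - v ^ m) / c) := by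
        rw [div_le_iff₀ hc0]
        have hexp : ((1 - v ^ m) / c + a * (1 - (1 - v ^ m) / c)) * c
            = (1 - v ^ m) + a * c - a * (1 - v ^ m) := by
          field_simp
          ring
        rw [hexp]
        nlinarith [hstar, ha0]
      calc Bf c κ (m + 1) r ≤ (1 - (1 - c * a) ^ (m + 1)) / c := hb1
        _ ≤ (1 - v ^ m) / c + a * (1 - (1 - v ^ m) / c) := hgoal
        _ = (1 - v ^ m) / c + κ / r * (1 - (1 - v ^ m) / c) := by rw [ha]
    · push_neg at hcap
      have hb0eq : Bf c κ m (r - 1) = 1 := by rw [hb0eq', min_eq_left hcap.le]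
      rw [hb0eq]
      have h1 := Bf_le_one (c := c) (κ := κ) (m + 1) r
      have h2 : κ / (r:ℝ) * (1 - 1) = 0 := by ring
      rw [h2]
      linarith
  -- main estimate
  by_cases hcase : E ≤ ρ
  · have h1 : Bf c κ (m + 1) r * E ≤ E := mul_le_of_le_one_left hE (Bf_le_one _ _)
    have h3 : 0 ≤ Bf c κ m (r - 1) * E' := mul_nonneg hb0nn hE'
    linarith
  · push_neg at hcase
    have hAr : κ / r * E ≤ ρ + τ := by
      rw [div_mul_eq_mul_div, div_le_iff₀ hrpos]
      linarith
    have h1 : (Bf c κ (m + 1) r - Bf c κ m (r - 1)) * E ≤ κ / r * (1 - Bf c κ m (r - 1)) * E :=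
      mul_le_mul_of_nonneg_right (by linarith) hE
    have h2 : (1 - Bf c κ m (r - 1)) * (κ / r * E) ≤ (1 - Bf c κ m (r - 1)) * (ρ + τ) :=
      mul_le_mul_of_nonneg_left hAr (by linarith)
    have h4 : 0 ≤ Bf c κ m (r - 1) * τ := mul_nonneg hb0nn hτ
    nlinarith [h1, h2, h4]

lemma Bf_final {c κ : ℝ} (hκ0 : 0 < κ) (hκ1 : κ ≤ 1) (hc0 : 0 < c) (hc1 : c ≤ 1)
    {K Hn : ℕ} (hK : 1 ≤ K) (hKH : K ≤ Hn) :
    (1 - Real.exp (-(c * κ))) / c ≤ Bf c κ Hn K := by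
  have hKne : K ≠ 0 := by omega
  have hKpos : (0:ℝ) < K := by exact_mod_cast Nat.pos_of_ne_zero hKne
  unfold Bf
  rw [if_neg hKne]
  have hw := base_mem hκ0 hκ1 hc0 hc1 hK
  apply le_min
  · rw [div_le_one hc0]
    have h1 := Real.add_one_le_exp (-(c * κ))
    nlinarith
  · have hnum : (1 - c * κ / ↑K) ^ Hn ≤ Real.exp (-(c * κ)) := by
      have h1 : 1 - c * κ / ↑K ≤ Real.exp (-(c * κ / ↑K)) := by
        have := Real.add_one_le_exp (-(c * κ / ↑K))
        linarith
      have h2 : (1 - c * κ / ↑K) ^ Hn ≤ (Real.exp (-(c * κ / ↑K))) ^ Hn :=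
        pow_le_pow_left₀ hw.1 h1 Hn
      have h3 : (Real.exp (-(c * κ / ↑K))) ^ Hn = Real.exp (Hn * -(c * κ / ↑K)) :=
        (Real.exp_nat_mul _ _).symm
      have h4 : Real.exp (Hn * -(c * κ / ↑K)) ≤ Real.exp (-(c * κ)) := by
        apply Real.exp_le_exp.mpr
        have hd0 : 0 ≤ c * κ / ↑K := by positivity
        have hd : c * κ / ↑K * ↑K = c * κ := div_mul_cancel₀ _ (ne_of_gt hKpos)
        have hKH' : (K:ℝ) ≤ Hn := by exact_mod_cast hKH
        nlinarith [mul_nonneg (sub_nonneg.mpr hKH') hd0]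
      linarith
    rw [div_le_div_iff₀ hc0 hc0]
    nlinarith [hnum, hc0]

set_option maxHeartbeats 1600000 in
theorem approximate_greedy_guarantee
    (n H : ℕ) (hH : 1 ≤ H) (g : Finset (Fin n) → ℝ)
    (hnonneg : ∀ S, 0 ≤ g S)
    (hmono : ∀ S₁ S₂ : Finset (Fin n), S₁ ⊆ S₂ → g S₁ ≤ g S₂)
    (h0 : g ∅ = 0)
    (κ c : ℝ) (hκ0 : 0 < κ) (hκ1 : κ ≤ 1) (hc0 : 0 < c) (hc1 : c ≤ 1)
    (hratio : ∀ S Ω : Finset (Fin n),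
        κ * (g (S ∪ Ω) - g S) ≤ ∑ ω ∈ Ω \ S, (g (insert ω S) - g S))
    (hcurv : ∀ S Ω : Finset (Fin n), ∀ ω : Fin n, S ⊆ Ω → ω ∉ Ω →
        (1 - c) * (g (insert ω S) - g S) ≤ g (insert ω Ω) - g Ω)
    (s : Fin H → Fin n) (τ : Fin H → ℝ) (hτ : ∀ l, 0 ≤ τ l)
    -- S^l = {s¹, …, s^l}
    (Sl : ℕ → Finset (Fin n))
    (hSl : ∀ l : ℕ, Sl l = (Finset.univ.filter (fun i : Fin H => (i : ℕ) < l)).image s)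
    (hgreedy : ∀ l : Fin H, ∀ i : Fin n,
        g (insert i (Sl l)) - τ l ≤ g (insert (s l) (Sl l))) :
    ∀ S : Finset (Fin n), S.card ≤ H →
      (1 / c) * (1 - Real.exp (-(c * κ))) * g S - ∑ l, τ l ≤ g (Sl H) := by
  intro S hcard
  have hSl0 : Sl 0 = ∅ := by
    rw [hSl 0]
    have h1 : (Finset.univ.filter (fun i : Fin H => (i : ℕ) < 0)) = ∅ := by
      ext i; simp
    rw [h1, Finset.image_empty]
  have hstep : ∀ t : ℕ, ∀ ht : t < H, Sl (t + 1) = insert (s ⟨t, ht⟩) (Sl t) := by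
    intro t ht
    rw [hSl (t + 1), hSl t]
    have h1 : (Finset.univ.filter (fun i : Fin H => (i : ℕ) < t + 1))
        = insert ⟨t, ht⟩ (Finset.univ.filter (fun i : Fin H => (i : ℕ) < t)) := by
      ext i
      simp [Fin.ext_iff]
      omega
    rw [h1, Finset.image_insert]
  have main : ∀ m t, t + m = H →
      g (Sl t) + Bf c κ m ((S \ Sl t).card) * (g (Sl t ∪ S) - g (Sl t))
        ≤ g (Sl H) + ∑ x ∈ Finset.univ.filter (fun x : Fin H => t ≤ (x : ℕ)), τ x := by
    intro m
    induction m with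
    | zero =>
        intro t ht
        have htH : t = H := by omega
        subst htH
        have hfil : (Finset.univ.filter (fun x : Fin t => t ≤ (x : ℕ))) = (∅ : Finset (Fin t)) := by
          ext x
          simp only [Finset.mem_filter, Finset.mem_univ, true_and, Finset.notMem_empty,
            iff_false, not_le]
          exact x.isLt
        rw [hfil, Finset.sum_empty, Bf_zero, zero_mul, add_zero]
    | succ m ih =>
        intro t htm
        have htH : t < H := by omega
        have ihm := ih (t + 1) (by omega)
        have hins : Sl (t + 1) = insert (s ⟨t, htH⟩) (Sl t) := hstep t htH
        have hsplit : (Finset.univ.filter (fun x : Fin H => t ≤ (x : ℕ)))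
            = insert ⟨t, htH⟩ (Finset.univ.filter (fun x : Fin H => t + 1 ≤ (x : ℕ))) := by
          ext x
          simp [Fin.ext_iff]
          omega
        have hlnot : (⟨t, htH⟩ : Fin H) ∉ Finset.univ.filter (fun x : Fin H => t + 1 ≤ (x : ℕ)) := by
          simp
        have hsum : ∑ x ∈ Finset.univ.filter (fun x : Fin H => t ≤ (x : ℕ)), τ x
            = τ ⟨t, htH⟩ + ∑ x ∈ Finset.univ.filter (fun x : Fin H => t + 1 ≤ (x : ℕ)), τ x := by
          rw [hsplit, Finset.sum_insert hlnot]
        have hsub : Sl t ⊆ Sl (t + 1) := by rw [hins]; exact Finset.subset_insert _ _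
        have hρ0 : 0 ≤ g (Sl (t + 1)) - g (Sl t) := sub_nonneg.mpr (hmono _ _ hsub)
        have hE0 : 0 ≤ g (Sl t ∪ S) - g (Sl t) :=
          sub_nonneg.mpr (hmono _ _ Finset.subset_union_left)
        have hE'0 : 0 ≤ g (Sl (t + 1) ∪ S) - g (Sl (t + 1)) :=
          sub_nonneg.mpr (hmono _ _ Finset.subset_union_left)
        have hτl : 0 ≤ τ ⟨t, htH⟩ := hτ _
        have hA : κ * (g (Sl t ∪ S) - g (Sl t))
            ≤ ((S \ Sl t).card : ℝ) * ((g (Sl (t + 1)) - g (Sl t)) + τ ⟨t, htH⟩) := by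
          have h1 := hratio (Sl t) S
          have h2 : ∑ ω ∈ S \ Sl t, (g (insert ω (Sl t)) - g (Sl t))
              ≤ (S \ Sl t).card • ((g (Sl (t + 1)) - g (Sl t)) + τ ⟨t, htH⟩) := by
            apply Finset.sum_le_card_nsmul
            intro ω hω
            have h3 := hgreedy ⟨t, htH⟩ ω
            rw [show ((⟨t, htH⟩ : Fin H) : ℕ) = t from rfl] at h3
            rw [hins]
            linarith
          rw [nsmul_eq_mul] at h2
          linarith
        by_cases hsF : s ⟨t, htH⟩ ∈ Sl t
        · have heq : Sl (t + 1) = Sl t := by rw [hins, Finset.insert_eq_self.mpr hsF]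
          rw [heq] at ihm hA
          have hNP := NPstep hκ0 hκ1 hc0 hc1 m ((S \ Sl t).card)
            (ρ := g (Sl t) - g (Sl t)) (τ := τ ⟨t, htH⟩)
            (E := g (Sl t ∪ S) - g (Sl t)) (E' := g (Sl t ∪ S) - g (Sl t))
            (by linarith) hτl hE0 hE0 hA (by nlinarith)
          linarith
        · by_cases hsS : s ⟨t, htH⟩ ∈ S
          · have hsd : s ⟨t, htH⟩ ∈ S \ Sl t := Finset.mem_sdiff.mpr ⟨hsS, hsF⟩
            have hunion : Sl (t + 1) ∪ S = Sl t ∪ S := by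
              rw [hins, Finset.insert_union,
                Finset.insert_eq_self.mpr (Finset.mem_union_right _ hsS)]
            have hsd' : S \ Sl (t + 1) = (S \ Sl t).erase (s ⟨t, htH⟩) := by
              rw [hins]
              ext x
              simp only [Finset.mem_sdiff, Finset.mem_insert, Finset.mem_erase]
              tauto
            have hrpos : 1 ≤ (S \ Sl t).card := Finset.card_pos.mpr ⟨_, hsd⟩
            have hr' : (S \ Sl (t + 1)).card = (S \ Sl t).card - 1 := by
              rw [hsd', Finset.card_erase_of_mem hsd]
            by_cases hr2 : 2 ≤ (S \ Sl t).card
            · have hE'def : g (Sl (t + 1) ∪ S) - g (Sl (t + 1))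
                  = (g (Sl t ∪ S) - g (Sl t)) - (g (Sl (t + 1)) - g (Sl t)) := by
                rw [hunion]; ring
              have hP := Pstep hκ0 hκ1 hc0 hc1 m ((S \ Sl t).card) hr2
                hρ0 hτl hE0 hE'0 hA hE'def
              rw [hr'] at ihm
              linarith
            · have hr1 : (S \ Sl t).card = 1 := by omega
              have hr0 : (S \ Sl (t + 1)).card = 0 := by omega
              have hSsub : S ⊆ Sl (t + 1) := by
                rw [← Finset.sdiff_eq_empty_iff_subset]
                exact Finset.card_eq_zero.mp hr0
              have hFS : Sl t ∪ S = Sl (t + 1) := by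
                rw [← hunion]
                exact Finset.union_eq_left.mpr hSsub
              rw [hr1, hFS]
              rw [hr0] at ihm
              have hBf0 : Bf c κ m 0 = 0 := by simp [Bf]
              rw [hBf0, zero_mul, add_zero] at ihm
              have hBle : Bf c κ (m + 1) 1 * (g (Sl (t + 1)) - g (Sl t))
                  ≤ g (Sl (t + 1)) - g (Sl t) :=
                mul_le_of_le_one_left hρ0 (Bf_le_one _ _)
              linarith
          · have hsd' : S \ Sl (t + 1) = S \ Sl t := by
              rw [hins]
              ext x
              simp only [Finset.mem_sdiff, Finset.mem_insert]
              constructor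
              · rintro ⟨hx1, hx2⟩; exact ⟨hx1, fun h => hx2 (Or.inr h)⟩
              · rintro ⟨hx1, hx2⟩
                refine ⟨hx1, ?_⟩
                rintro (rfl | h)
                · exact hsS hx1
                · exact hx2 h
            have hωnot : s ⟨t, htH⟩ ∉ Sl t ∪ S := by
              simp only [Finset.mem_union]
              tauto
            have hc' := hcurv (Sl t) (Sl t ∪ S) (s ⟨t, htH⟩) Finset.subset_union_left hωnot
            have hinsu : insert (s ⟨t, htH⟩) (Sl t ∪ S) = Sl (t + 1) ∪ S := by
              rw [hins, Finset.insert_union]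
            rw [hinsu, ← hins] at hc'
            have hEE : (g (Sl t ∪ S) - g (Sl t)) - c * (g (Sl (t + 1)) - g (Sl t))
                ≤ g (Sl (t + 1) ∪ S) - g (Sl (t + 1)) := by nlinarith [hc']
            have hNP := NPstep hκ0 hκ1 hc0 hc1 m ((S \ Sl t).card)
              hρ0 hτl hE0 hE'0 hA hEE
            rw [hsd'] at ihm
            linarith
  have P0 := main H 0 (by omega)
  rw [hSl0] at P0
  simp only [Finset.sdiff_empty, Finset.empty_union, h0, sub_zero, zero_add] at P0
  have hfil : (Finset.univ.filter (fun x : Fin H => 0 ≤ (x : ℕ))) = Finset.univ := by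
    apply Finset.filter_true_of_mem
    intro x _
    exact Nat.zero_le _
  rw [hfil] at P0
  by_cases hK : S.card = 0
  · have hSempty : S = ∅ := Finset.card_eq_zero.mp hK
    subst hSempty
    rw [h0]
    have hsum0 : 0 ≤ ∑ l, τ l := Finset.sum_nonneg fun l _ => hτ l
    have := hnonneg (Sl H)
    nlinarith
  · have hK1 : 1 ≤ S.card := Nat.one_le_iff_ne_zero.mpr hK
    have hfin := Bf_final hκ0 hκ1 hc0 hc1 hK1 hcard
    have hgS := hnonneg S
    have h1 : (1 - Real.exp (-(c * κ))) / c * g S ≤ Bf c κ H S.card * g S :=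
      mul_le_mul_of_nonneg_right hfin hgS
    have heq : (1 / c) * (1 - Real.exp (-(c * κ))) * g S
        = (1 - Real.exp (-(c * κ))) / c * g S := by ring
    rw [heq]
    linarith
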